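/- (Dipper–James) For every symmetric polynomial f in n−1 variables over R (i.e. f is invariant under every permutation of its variables), the evaluation f(M(2), …, M(n)) — which is well defined since the Murphy operators commute pairwise — is central in the Hecke algebra Hₙ. -/

import Mathlib

/-- The defining relations of the Hecke algebra `Hₙ` of type `A` over a
commutative ring `R` with invertible parameter `s` (and `z = s - s⁻¹`), imposed
on the free `R`-algebra on generators `σ₁, …, σ_{n-1}` (indexed by `Fin (n-1)`,
so the generator `σ_k` corresponds to the index `k - 1`):
far-apart commutation, the braid relations, and the quadratic relations
`σᵢ² = z σᵢ + 1`. -/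
inductive HeckeRel (R : Type*) [CommRing R] (s : Rˣ) (n : ℕ) :
    FreeAlgebra R (Fin (n - 1)) → FreeAlgebra R (Fin (n - 1)) → Prop
  | comm (i j : Fin (n - 1)) (h : (i : ℕ) + 2 ≤ (j : ℕ)) :
      HeckeRel R s n (FreeAlgebra.ι R i * FreeAlgebra.ι R j)
        (FreeAlgebra.ι R j * FreeAlgebra.ι R i)
  | braid (i j : Fin (n - 1)) (h : (j : ℕ) = (i : ℕ) + 1) :
      HeckeRel R s n (FreeAlgebra.ι R i * FreeAlgebra.ι R j * FreeAlgebra.ι R i)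
        (FreeAlgebra.ι R j * FreeAlgebra.ι R i * FreeAlgebra.ι R j)
  | quad (i : Fin (n - 1)) :
      HeckeRel R s n (FreeAlgebra.ι R i * FreeAlgebra.ι R i)
        (((s : R) - ((s⁻¹ : Rˣ) : R)) • FreeAlgebra.ι R i + 1)

/-- The Hecke algebra `Hₙ`: the quotient of the free `R`-algebra on
`σ₁, …, σ_{n-1}` by the two-sided ideal generated by the Hecke relations. -/
abbrev Hecke (R : Type*) [CommRing R] (s : Rˣ) (n : ℕ) : Type _ :=
  RingQuot (HeckeRel R s n)

variable {R : Type*} [CommRing R]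

/-- The generator `σ_{k+1}` of the Hecke algebra `Hₙ` (0-based index `k`, so
`heckeGen s n (k-1)` is the generator `σ_k` for `1 ≤ k ≤ n-1`); indices out of
range give `1`. -/
noncomputable def heckeGen (s : Rˣ) (n k : ℕ) : Hecke R s n :=
  if h : k < n - 1 then RingQuot.mkAlgHom R (HeckeRel R s n) (FreeAlgebra.ι R ⟨k, h⟩) else 1

/-- The ascending product `σ_i σ_{i+1} ⋯ σ_{j-1}` in `Hₙ` (1-based labels). -/
noncomputable def ascProd (s : Rˣ) (n i j : ℕ) : Hecke R s n :=
  ((List.range (j - i)).map (fun t => heckeGen s n (i - 1 + t))).prod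

/-- The descending product `σ_{j-1} σ_{j-2} ⋯ σ_i` in `Hₙ` (1-based labels). -/
noncomputable def descProd (s : Rˣ) (n i j : ℕ) : Hecke R s n :=
  (((List.range (j - i)).map (fun t => heckeGen s n (i - 1 + t))).reverse).prod

/-- The element `T(j) = (σ_{j-1} ⋯ σ₁)(σ₁ ⋯ σ_{j-1})` of `Hₙ`, with `T(1) = 1`. -/
noncomputable def heckeT (s : Rˣ) (n j : ℕ) : Hecke R s n :=
  descProd s n 1 j * ascProd s n 1 j

/-- The positive permutation braid element
`ω_{(i j)} = σ_{j-1} ⋯ σ_{i+1} · σᵢ · σ_{i+1} ⋯ σ_{j-1}` of `Hₙ`, for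
`1 ≤ i < j ≤ n` (for `j = i + 1` this is just `σᵢ`). -/
noncomputable def omegaBraid (s : Rˣ) (n i j : ℕ) : Hecke R s n :=
  descProd s n (i + 1) j * heckeGen s n (i - 1) * ascProd s n (i + 1) j

/-- The Murphy operator `M(j) = ∑_{i=1}^{j-1} ω_{(i j)}` in `Hₙ`. -/
noncomputable def murphyOp (s : Rˣ) (n j : ℕ) : Hecke R s n :=
  ∑ i ∈ Finset.Ico 1 j, omegaBraid s n i j

/-- Evaluation of a multivariate polynomial `f` in `n - 1` variables at the
(pairwise commuting) Murphy operators `M(2), …, M(n)`: the variable indexed by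
`i : Fin (n-1)` is sent to `M(i+2)`.  Since the Murphy operators commute,
taking the products of the powers in the fixed order of `Fin (n-1)` gives the
usual evaluation. -/
noncomputable def evalMurphy (s : Rˣ) (n : ℕ) (f : MvPolynomial (Fin (n - 1)) R) :
    Hecke R s n :=
  ∑ d ∈ f.support, f.coeff d •
    ((List.finRange (n - 1)).map (fun (i : Fin (n - 1)) => murphyOp s n (i.val + 2) ^ d i)).prod

section DipperJamesAux

variable {R : Type*} [CommRing R]

namespace DJ

variable (s : Rˣ) (n : ℕ)

/-- Local abbreviation for the generators. -/
noncomputable def G (k : ℕ) : Hecke R s n := heckeGen s n k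

local notation "zz" => ((s : R) - ((s⁻¹ : Rˣ) : R))

lemma quad {k : ℕ} (hk : k < n - 1) :
    G s n k * G s n k = zz • G s n k + 1 := by
  rw [G, heckeGen, dif_pos hk, ← map_mul,
    RingQuot.mkAlgHom_rel R (HeckeRel.quad (s := s) ⟨k, hk⟩), map_add, map_smul, map_one]

lemma gcomm {i j : ℕ} (h : i + 2 ≤ j) : Commute (G s n i) (G s n j) := by
  unfold G heckeGen
  by_cases hj : j < n - 1
  · have hi : i < n - 1 := by omega
    rw [dif_pos hi, dif_pos hj]
    show _ * _ = _ * _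
    rw [← map_mul, ← map_mul,
      RingQuot.mkAlgHom_rel R (HeckeRel.comm (s := s) ⟨i, hi⟩ ⟨j, hj⟩ h)]
  · rw [dif_neg hj]
    exact Commute.one_right _

lemma braid {k : ℕ} (hk : k + 1 < n - 1) :
    G s n k * G s n (k + 1) * G s n k = G s n (k + 1) * G s n k * G s n (k + 1) := by
  have hk0 : k < n - 1 := by omega
  unfold G heckeGen
  rw [dif_pos hk0, dif_pos hk, ← map_mul, ← map_mul, ← map_mul, ← map_mul,
    RingQuot.mkAlgHom_rel R (HeckeRel.braid (s := s) ⟨k, hk0⟩ ⟨k + 1, hk⟩ rfl)]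

/-- ascending product `G a * G (a+1) * ⋯ * G (a+m-1)`. -/
noncomputable def AP (a m : ℕ) : Hecke R s n :=
  ((List.range m).map (fun t => G s n (a + t))).prod

/-- descending product `G (a+m-1) * ⋯ * G a`. -/
noncomputable def DP (a m : ℕ) : Hecke R s n :=
  (((List.range m).map (fun t => G s n (a + t))).reverse).prod

lemma AP_zero (a : ℕ) : AP s n a 0 = 1 := rfl
lemma DP_zero (a : ℕ) : DP s n a 0 = 1 := rfl

lemma AP_succ (a m : ℕ) : AP s n a (m + 1) = AP s n a m * G s n (a + m) := by
  simp [AP, List.range_succ]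

lemma DP_succ (a m : ℕ) : DP s n a (m + 1) = G s n (a + m) * DP s n a m := by
  simp [DP, List.range_succ]

lemma AP_add (a m₁ m₂ : ℕ) : AP s n a (m₁ + m₂) = AP s n a m₁ * AP s n (a + m₁) m₂ := by
  simp [AP, List.range_add, Function.comp_def, add_assoc]

lemma DP_add (a m₁ m₂ : ℕ) : DP s n a (m₁ + m₂) = DP s n (a + m₁) m₂ * DP s n a m₁ := by
  simp [DP, List.range_add, Function.comp_def, add_assoc]

lemma commute_G_AP {k a m : ℕ} (h : ∀ t, t < m → Commute (G s n k) (G s n (a + t))) :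
    Commute (G s n k) (AP s n a m) := by
  refine Commute.list_prod_right _ _ ?_
  intro x hx
  obtain ⟨t, ht, rfl⟩ := List.mem_map.mp hx
  exact h t (List.mem_range.mp ht)

lemma commute_G_DP {k a m : ℕ} (h : ∀ t, t < m → Commute (G s n k) (G s n (a + t))) :
    Commute (G s n k) (DP s n a m) := by
  refine Commute.list_prod_right _ _ ?_
  intro x hx
  rw [List.mem_reverse] at hx
  obtain ⟨t, ht, rfl⟩ := List.mem_map.mp hx
  exact h t (List.mem_range.mp ht)

lemma commute_G_AP_hi {k a m : ℕ} (h : k + 2 ≤ a) : Commute (G s n k) (AP s n a m) :=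
  commute_G_AP s n fun t _ => gcomm s n (by omega)

lemma commute_G_DP_hi {k a m : ℕ} (h : k + 2 ≤ a) : Commute (G s n k) (DP s n a m) :=
  commute_G_DP s n fun t _ => gcomm s n (by omega)

lemma commute_G_AP_lo {k a m : ℕ} (h : a + m + 1 ≤ k) : Commute (G s n k) (AP s n a m) :=
  commute_G_AP s n fun t ht => (gcomm s n (by omega)).symm

lemma commute_G_DP_lo {k a m : ℕ} (h : a + m + 1 ≤ k) : Commute (G s n k) (DP s n a m) :=
  commute_G_DP s n fun t ht => (gcomm s n (by omega)).symm

lemma omega_eq (i j : ℕ) :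
    omegaBraid s n i j = DP s n i (j - i - 1) * G s n (i - 1) * AP s n i (j - i - 1) := rfl

lemma omega_self (i : ℕ) : omegaBraid s n i (i + 1) = G s n (i - 1) := by
  have h : i + 1 - i - 1 = 0 := by omega
  rw [omega_eq, h, AP_zero, DP_zero, one_mul, mul_one]

lemma omega_succ {i k : ℕ} (h1 : 1 ≤ i) (h2 : i ≤ k) :
    omegaBraid s n i (k + 2) = G s n k * omegaBraid s n i (k + 1) * G s n k := by
  have e1 : k + 2 - i - 1 = (k - i) + 1 := by omega
  have e2 : k + 1 - i - 1 = k - i := by omega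
  have e3 : i + (k - i) = k := by omega
  rw [omega_eq, omega_eq, e1, e2, DP_succ, AP_succ, e3]
  simp only [mul_assoc]

lemma murphy_succ (k : ℕ) :
    murphyOp s n (k + 2) = G s n k * murphyOp s n (k + 1) * G s n k + G s n k := by
  unfold murphyOp
  rw [Finset.sum_Ico_succ_top (by omega : 1 ≤ k + 1), omega_self, Nat.add_sub_cancel,
    Finset.mul_sum, Finset.sum_mul]
  congr 1
  refine Finset.sum_congr rfl fun i hi => ?_
  obtain ⟨h1, h2⟩ := Finset.mem_Ico.mp hi
  exact omega_succ s n h1 (by omega)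

lemma murphy_two : murphyOp s n 2 = G s n 0 := by
  unfold murphyOp
  rw [Finset.sum_Ico_succ_top (by omega : (1:ℕ) ≤ 1), Finset.Ico_self, Finset.sum_empty,
    zero_add]
  exact omega_self s n 1

lemma commute_G_murphy_low {k j : ℕ} (h : j ≤ k) :
    Commute (G s n k) (murphyOp s n j) := by
  refine Commute.sum_right _ _ _ fun i hi => ?_
  obtain ⟨h1, h2⟩ := Finset.mem_Ico.mp hi
  rw [omega_eq]
  exact ((commute_G_DP_lo s n (by omega)).mul_right
    ((gcomm s n (by omega)).symm)).mul_right (commute_G_AP_lo s n (by omega))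

lemma lc {A : Type*} [Semigroup A] {x y : A} (h : Commute x y) (w : A) :
    x * (y * w) = y * (x * w) := by rw [← mul_assoc, h.eq, mul_assoc]

lemma braid_assoc {A : Type*} [Semigroup A] {σ τ : A}
    (hb : σ * τ * σ = τ * σ * τ) (w : A) :
    σ * (τ * (σ * w)) = τ * (σ * (τ * w)) := by
  rw [← mul_assoc, ← mul_assoc, hb, mul_assoc, mul_assoc]

lemma conj_comm {A : Type*} [Monoid A] {σ τ d2 a2 m : A}
    (hb : σ * τ * σ = τ * σ * τ) (h1 : Commute σ d2) (h2 : Commute σ a2)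
    (h3 : Commute τ m) :
    Commute σ (d2 * (τ * (σ * (m * (σ * (τ * a2)))))) := by
  show _ = _
  calc σ * (d2 * (τ * (σ * (m * (σ * (τ * a2))))))
      = d2 * (σ * (τ * (σ * (m * (σ * (τ * a2)))))) := lc h1 _
    _ = d2 * (τ * (σ * (τ * (m * (σ * (τ * a2)))))) := by rw [braid_assoc hb]
    _ = d2 * (τ * (σ * (m * (τ * (σ * (τ * a2)))))) := by rw [lc h3]
    _ = d2 * (τ * (σ * (m * (σ * (τ * (σ * a2)))))) := by rw [← braid_assoc hb]
    _ = d2 * (τ * (σ * (m * (σ * (τ * (a2 * σ)))))) := by rw [h2.eq]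
    _ = (d2 * (τ * (σ * (m * (σ * (τ * a2)))))) * σ := by simp only [mul_assoc]

lemma pair_comm {R : Type*} [CommRing R] {A : Type*} [Ring A] [Algebra R A]
    {z : R} {σ τ d a : A}
    (hb : σ * τ * σ = τ * σ * τ) (hq : τ * τ = z • τ + 1)
    (h1 : Commute σ d) (h2 : Commute σ a) :
    Commute σ (d * (τ * (σ * (τ * a))) + d * (τ * a)) := by
  have hττ : ∀ w : A, τ * (τ * w) = z • (τ * w) + w := fun w => by
    rw [← mul_assoc, hq, add_mul, smul_mul_assoc, one_mul]
  show _ = _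
  have L : σ * (d * (τ * (σ * (τ * a))) + d * (τ * a))
      = z • (d * (τ * (σ * (τ * a)))) + (d * (τ * (σ * a)) + d * (σ * (τ * a))) := by
    rw [mul_add, lc h1, lc h1, braid_assoc hb, hττ]
    simp only [mul_add, mul_smul_comm]
    abel
  have Rr : (d * (τ * (σ * (τ * a))) + d * (τ * a)) * σ
      = z • (d * (τ * (σ * (τ * a)))) + (d * (τ * (σ * a)) + d * (σ * (τ * a))) := by
    simp only [add_mul, mul_assoc]
    rw [← h2.eq]
    rw [braid_assoc hb, hττ]
    simp only [mul_add, mul_smul_comm]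
    abel
  rw [L, Rr]

lemma DP_two (k : ℕ) : DP s n k 2 = G s n (k + 1) * G s n k := by
  simp [DP, List.range_succ]

lemma AP_two (k : ℕ) : AP s n k 2 = G s n k * G s n (k + 1) := by
  simp [AP, List.range_succ]

lemma DP_one (k : ℕ) : DP s n k 1 = G s n k := by
  simp [DP, List.range_succ]

lemma AP_one (k : ℕ) : AP s n k 1 = G s n k := by
  simp [AP, List.range_succ]

lemma commute_G_omega_low {k i j : ℕ} (h1 : 1 ≤ i) (h2 : i ≤ k) (h3 : k + 3 ≤ j)
    (h4 : j ≤ n) : Commute (G s n k) (omegaBraid s n i j) := by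
  have e : j - i - 1 = (k - i) + (2 + (j - k - 3)) := by omega
  have e3 : i + (k - i) = k := by omega
  have hsh : omegaBraid s n i j
      = DP s n (k + 2) (j - k - 3) * (G s n (k + 1) * (G s n k *
          ((DP s n i (k - i) * (G s n (i - 1) * AP s n i (k - i))) * (G s n k *
            (G s n (k + 1) * AP s n (k + 2) (j - k - 3)))))) := by
    rw [omega_eq, e, DP_add, AP_add, e3, DP_add, AP_add, DP_two, AP_two]
    simp only [mul_assoc]
  rw [hsh]
  have hm : Commute (G s n (k + 1))
      (DP s n i (k - i) * (G s n (i - 1) * AP s n i (k - i))) :=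
    (commute_G_DP_lo s n (by omega)).mul_right
      (((gcomm s n (by omega)).symm).mul_right (commute_G_AP_lo s n (by omega)))
  exact conj_comm (braid s n (by omega)) (commute_G_DP_hi s n (by omega))
    (commute_G_AP_hi s n (by omega)) hm

lemma commute_G_omega_hi {k i j : ℕ} (h : k + 3 ≤ i) :
    Commute (G s n k) (omegaBraid s n i j) := by
  rw [omega_eq]
  exact ((commute_G_DP_hi s n (by omega)).mul_right
    (gcomm s n (by omega))).mul_right (commute_G_AP_hi s n (by omega))

lemma commute_G_omega_pair {k j : ℕ} (h3 : k + 3 ≤ j) (h4 : j ≤ n) :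
    Commute (G s n k) (omegaBraid s n (k + 1) j + omegaBraid s n (k + 2) j) := by
  have e1 : j - (k + 1) - 1 = 1 + (j - k - 3) := by omega
  have e2 : j - (k + 2) - 1 = j - k - 3 := by omega
  have h1 : omegaBraid s n (k + 1) j
      = DP s n (k + 2) (j - k - 3) * (G s n (k + 1) * (G s n k *
          (G s n (k + 1) * AP s n (k + 2) (j - k - 3)))) := by
    rw [omega_eq, e1, DP_add, AP_add, DP_one, AP_one, Nat.add_sub_cancel]
    simp only [mul_assoc]
  have h2 : omegaBraid s n (k + 2) j
      = DP s n (k + 2) (j - k - 3) * (G s n (k + 1) * AP s n (k + 2) (j - k - 3)) := by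
    rw [omega_eq, e2, (show k + 2 - 1 = k + 1 by omega)]
    simp only [mul_assoc]
  rw [h1, h2]
  exact pair_comm (braid s n (by omega)) (quad s n (by omega))
    (commute_G_DP_hi s n (by omega)) (commute_G_AP_hi s n (by omega))

lemma commute_G_murphy_high {k j : ℕ} (h3 : k + 3 ≤ j) (h4 : j ≤ n) :
    Commute (G s n k) (murphyOp s n j) := by
  unfold murphyOp
  rw [← Finset.sum_Ico_consecutive _ (by omega : 1 ≤ k + 1) (by omega : k + 1 ≤ j),
    ← Finset.sum_Ico_consecutive _ (by omega : k + 1 ≤ k + 3) (by omega : k + 3 ≤ j)]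
  have hmid : ∑ i ∈ Finset.Ico (k + 1) (k + 3), omegaBraid s n i j
      = omegaBraid s n (k + 1) j + omegaBraid s n (k + 2) j := by
    rw [Finset.sum_Ico_succ_top (by omega : k + 1 ≤ k + 2),
      Finset.sum_Ico_succ_top (by omega : k + 1 ≤ k + 1), Finset.Ico_self,
      Finset.sum_empty, zero_add]
  refine Commute.add_right (Commute.sum_right _ _ _ fun i hi => ?_)
    (Commute.add_right ?_ (Commute.sum_right _ _ _ fun i hi => ?_))
  · obtain ⟨hi1, hi2⟩ := Finset.mem_Ico.mp hi
    exact commute_G_omega_low s n hi1 (by omega) h3 h4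
  · rw [hmid]; exact commute_G_omega_pair s n h3 h4
  · obtain ⟨hi1, hi2⟩ := Finset.mem_Ico.mp hi
    exact commute_G_omega_hi s n (by omega)

lemma commute_murphy_murphy {j l : ℕ} (hjl : j < l) (hl : l ≤ n) :
    Commute (murphyOp s n j) (murphyOp s n l) := by
  refine Commute.sum_left _ _ _ fun i hi => ?_
  obtain ⟨h1, h2⟩ := Finset.mem_Ico.mp hi
  have key : ∀ t : ℕ, t + 3 ≤ l → Commute (G s n t) (murphyOp s n l) :=
    fun t ht => commute_G_murphy_high s n ht hl
  rw [omega_eq]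
  refine (((Commute.list_prod_left _ _ ?_).mul_left (key (i - 1) (by omega))).mul_left
    (Commute.list_prod_left _ _ ?_)).symm.symm
  · intro x hx
    rw [List.mem_reverse] at hx
    obtain ⟨t, ht, rfl⟩ := List.mem_map.mp hx
    exact key (i + t) (by have := List.mem_range.mp ht; omega)
  · intro x hx
    obtain ⟨t, ht, rfl⟩ := List.mem_map.mp hx
    exact key (i + t) (by have := List.mem_range.mp ht; omega)

end DJ

section KeyRing

variable {R : Type*} [CommRing R] {A : Type*} [Ring A] [Algebra R A]
variable {z : R} {σ a b : A}

lemma key_sigma_b (hq : σ * σ = z • σ + 1) (hb : b = σ * a * σ + σ) :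
    σ * b = z • b + a * σ + 1 := by
  have hσσ : ∀ w : A, σ * (σ * w) = z • (σ * w) + w := fun w => by
    rw [← mul_assoc, hq, add_mul, smul_mul_assoc, one_mul]
  rw [hb]
  simp only [mul_add, mul_assoc, hσσ, hq, smul_add]
  abel

lemma key_b_sigma (hq : σ * σ = z • σ + 1) (hb : b = σ * a * σ + σ) :
    b * σ = z • b + σ * a + 1 := by
  rw [hb]
  simp only [add_mul, mul_assoc, hq, mul_add, mul_smul_comm, mul_one, smul_add]
  abel

lemma key_comm_add (hq : σ * σ = z • σ + 1) (hb : b = σ * a * σ + σ) :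
    Commute σ (a + b) := by
  show _ = _
  rw [mul_add, add_mul, key_sigma_b hq hb, key_b_sigma hq hb]
  abel

lemma key_comm_mul (hq : σ * σ = z • σ + 1) (hab : Commute a b)
    (hb : b = σ * a * σ + σ) : Commute σ (a * b) := by
  show _ = _
  calc σ * (a * b) = σ * (b * a) := by rw [hab.eq]
    _ = (σ * b) * a := by rw [mul_assoc]
    _ = (z • b + a * σ + 1) * a := by rw [key_sigma_b hq hb]
    _ = z • (b * a) + a * (σ * a) + a := by
        simp only [add_mul, smul_mul_assoc, one_mul, mul_assoc]
    _ = z • (a * b) + a * (σ * a) + a := by rw [hab.eq]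
    _ = a * (z • b + σ * a + 1) := by
        simp only [mul_add, mul_smul_comm, mul_one]
    _ = a * (b * σ) := by rw [key_b_sigma hq hb]
    _ = (a * b) * σ := by rw [mul_assoc]

lemma key_newton (hab : Commute a b) (q : ℕ) :
    a ^ (q + 2) + b ^ (q + 2)
      = (a + b) * (a ^ (q + 1) + b ^ (q + 1)) - a * b * (a ^ q + b ^ q) := by
  have e1 : b * a ^ (q + 1) = a ^ (q + 1) * b := (hab.symm.pow_right _).eq
  have e2 : b * a ^ q = a ^ q * b := (hab.symm.pow_right _).eq
  simp only [mul_add, add_mul, mul_assoc]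
  rw [e1, e2]
  simp only [← mul_assoc, ← pow_succ']
  abel

lemma key_comm_powsum (hq : σ * σ = z • σ + 1) (hab : Commute a b)
    (hb : b = σ * a * σ + σ) (q : ℕ) : Commute σ (a ^ q + b ^ q) := by
  induction q using Nat.strong_induction_on with
  | _ q ih =>
    rcases q with _ | _ | q
    · simpa using Commute.add_right (Commute.one_right σ) (Commute.one_right σ)
    · simpa [pow_one] using key_comm_add hq hb
    · rw [key_newton hab q]
      exact ((key_comm_add hq hb).mul_right (ih (q + 1) (by omega))).sub_right
        ((key_comm_mul hq hab hb).mul_right (ih q (by omega)))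

lemma key_comm_S_le (hq : σ * σ = z • σ + 1) (hab : Commute a b)
    (hb : b = σ * a * σ + σ) {p q : ℕ} (hpq : p ≤ q) :
    Commute σ (a ^ p * b ^ q + a ^ q * b ^ p) := by
  have e : a ^ p * b ^ q + a ^ q * b ^ p
      = (a * b) ^ p * (a ^ (q - p) + b ^ (q - p)) := by
    rw [hab.mul_pow, mul_add, mul_assoc, mul_assoc, (hab.symm.pow_pow _ _).eq,
      ← pow_add, ← mul_assoc, ← pow_add, (show p + (q - p) = q by omega)]
    abel
  rw [e]
  exact ((key_comm_mul hq hab hb).pow_right p).mul_right (key_comm_powsum hq hab hb _)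

lemma key_comm_S (hq : σ * σ = z • σ + 1) (hab : Commute a b)
    (hb : b = σ * a * σ + σ) (p q : ℕ) : Commute σ (a ^ p * b ^ q + a ^ q * b ^ p) := by
  rcases le_total p q with h | h
  · exact key_comm_S_le hq hab hb h
  · have := key_comm_S_le hq hab hb h
    rwa [add_comm] at this

lemma key_comm_P (hq : σ * σ = z • σ + 1) (hab : Commute a b)
    (hb : b = σ * a * σ + σ) (p : ℕ) : Commute σ (a ^ p * b ^ p) := by
  rw [← hab.mul_pow]
  exact (key_comm_mul hq hab hb).pow_right p

end KeyRing

namespace DJ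

variable {R : Type*} [CommRing R] (s : Rˣ) (n : ℕ)

/-- The Murphy operators indexed by `Fin (n-1)`. -/
noncomputable def MO (i : Fin (n - 1)) : Hecke R s n := murphyOp s n (i.val + 2)

lemma MO_comm : ∀ x ∈ Set.range (MO s n), ∀ y ∈ Set.range (MO s n), x * y = y * x := by
  rintro _ ⟨i, rfl⟩ _ ⟨j, rfl⟩
  rcases lt_trichotomy (i : ℕ) (j : ℕ) with h | h | h
  · exact (commute_murphy_murphy s n (by omega) (by have := j.isLt; omega)).eq
  · rw [MO, MO, h]
  · exact (commute_murphy_murphy s n (by omega) (by have := i.isLt; omega)).symm.eq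

/-- the commutative subalgebra generated by the Murphy operators. -/
noncomputable def CC : Subalgebra R (Hecke R s n) := Algebra.adjoin R (Set.range (MO s n))

noncomputable def commCC : CommRing (CC s n) :=
  Algebra.adjoinCommRingOfComm R (MO_comm s n)

attribute [local instance] commCC

/-- the Murphy operators as elements of the commutative subalgebra. -/
noncomputable def MM (i : Fin (n - 1)) : CC s n :=
  ⟨MO s n i, Algebra.subset_adjoin (Set.mem_range_self i)⟩

lemma evalMurphy_eq (f : MvPolynomial (Fin (n - 1)) R) :
    evalMurphy s n f =
      ∑ d ∈ f.support, f.coeff d • ((∏ i : Fin (n - 1), MM s n i ^ d i : CC s n) : Hecke R s n) := by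
  unfold evalMurphy
  refine Finset.sum_congr rfl fun d _ => ?_
  congr 1
  rw [Fin.prod_univ_def]
  generalize List.finRange (n - 1) = l
  induction l with
  | nil => simp; rfl
  | cons hd tl ih =>
    simp only [List.map_cons, List.prod_cons, MulMemClass.coe_mul,
      SubmonoidClass.coe_pow, ih]
    rfl

lemma commute_coe_prod {σ : Hecke R s n} {T : Finset (Fin (n - 1))}
    {g : Fin (n - 1) → CC s n} (h : ∀ i ∈ T, Commute σ ((g i : CC s n) : Hecke R s n)) :
    Commute σ ((∏ i ∈ T, g i : CC s n) : Hecke R s n) := by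
  refine Finset.prod_induction g (fun x : CC s n => Commute σ (x : Hecke R s n)) ?_ ?_ h
  · intro x y hx hy
    show Commute σ ((x : Hecke R s n) * (y : Hecke R s n))
    exact hx.mul_right hy
  · show Commute σ ((1 : CC s n) : Hecke R s n)
    rw [OneMemClass.coe_one]
    exact Commute.one_right σ

lemma commute_evalMurphy_G (f : MvPolynomial (Fin (n - 1)) R) (hf : f.IsSymmetric)
    (k : ℕ) (hk : k < n - 1) : Commute (evalMurphy s n f) (G s n k) := by
  classical
  rw [evalMurphy_eq]
  set σ := G s n k with hσ
  rcases Nat.eq_zero_or_pos k with rfl | hk1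
  · -- `σ₁` commutes with every Murphy operator
    refine Commute.sum_left _ _ _ fun d _ => ?_
    refine Commute.smul_left ?_ _
    refine (commute_coe_prod s n fun i _ => ?_).symm
    have hpow : ((MM s n i ^ d i : CC s n) : Hecke R s n)
        = murphyOp s n (i.val + 2) ^ d i := by
      rw [SubmonoidClass.coe_pow]; rfl
    rw [hpow]
    refine Commute.pow_right ?_ _
    rcases Nat.eq_zero_or_pos i.val with hi | hi
    · have h2 : murphyOp s n (i.val + 2) = G s n 0 := by
        rw [hi]; exact murphy_two s n
      rw [h2]
      exact Commute.refl _
    · exact commute_G_murphy_high s n (by omega) (by have := i.isLt; omega)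
  · -- main case `k ≥ 1`
    have hk2 : k + 2 ≤ n := by omega
    set u : Fin (n - 1) := ⟨k - 1, by omega⟩ with hu
    set v : Fin (n - 1) := ⟨k, hk⟩ with hv
    have huv : u ≠ v := by
      simp only [hu, hv, ne_eq, Fin.mk.injEq]
      omega
    set τ := Equiv.swap u v with hτ
    set a := murphyOp s n (k + 1) with ha
    set b := murphyOp s n (k + 2) with hbdef
    have hq := quad s n hk
    have hab : Commute a b := commute_murphy_murphy s n (by omega) hk2
    have hbrel : b = σ * a * σ + σ := murphy_succ s n k
    have hother : ∀ i : Fin (n - 1), i ≠ u → i ≠ v →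
        Commute σ (murphyOp s n (i.val + 2)) := by
      intro i hiu hiv
      have hiu' : (i : ℕ) ≠ k - 1 := fun h => hiu (Fin.ext h)
      have hiv' : (i : ℕ) ≠ k := fun h => hiv (Fin.ext h)
      rcases lt_or_gt_of_ne hiv' with h | h
      · exact commute_G_murphy_low s n (by omega)
      · exact commute_G_murphy_high s n (by omega) (by have := i.isLt; omega)
    set Pc : (Fin (n - 1) →₀ ℕ) → CC s n := fun d => ∏ i, MM s n i ^ d i with hPc
    set Qc : (Fin (n - 1) →₀ ℕ) → CC s n :=
      fun d => ∏ i ∈ (Finset.univ.erase u).erase v, MM s n i ^ d i with hQc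
    have hMMu : ((MM s n u : CC s n) : Hecke R s n) = a := by
      show murphyOp s n (k - 1 + 2) = a
      rw [ha]; congr 1; omega
    have hMMv : ((MM s n v : CC s n) : Hecke R s n) = b := by
      show murphyOp s n (k + 2) = b
      rw [hbdef]
    have hdecomp : ∀ d : Fin (n - 1) →₀ ℕ,
        ((Pc d : CC s n) : Hecke R s n) = a ^ d u * b ^ d v * (Qc d : Hecke R s n) := by
      intro d
      have e : Pc d = MM s n u ^ d u * (MM s n v ^ d v * Qc d) := by
        show (∏ i : Fin (n - 1), MM s n i ^ d i) = MM s n u ^ d u * (MM s n v ^ d v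
            * ∏ i ∈ (Finset.univ.erase u).erase v, MM s n i ^ d i)
        rw [← Finset.mul_prod_erase Finset.univ _ (Finset.mem_univ u),
          ← Finset.mul_prod_erase _ _
            (Finset.mem_erase.mpr ⟨huv.symm, Finset.mem_univ v⟩)]
        rfl
      rw [e, MulMemClass.coe_mul, MulMemClass.coe_mul, SubmonoidClass.coe_pow,
        SubmonoidClass.coe_pow, hMMu, hMMv, mul_assoc]
    have hQcom : ∀ d : Fin (n - 1) →₀ ℕ, Commute σ ((Qc d : CC s n) : Hecke R s n) := by
      intro d
      refine commute_coe_prod s n fun i hi => ?_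
      have hiv : i ≠ v := (Finset.mem_erase.mp hi).1
      have hiu : i ≠ u := (Finset.mem_erase.mp (Finset.mem_erase.mp hi).2).1
      have hpow : ((MM s n i ^ d i : CC s n) : Hecke R s n)
          = murphyOp s n (i.val + 2) ^ d i := by
        rw [SubmonoidClass.coe_pow]; rfl
      rw [hpow]
      exact (hother i hiu hiv).pow_right _
    -- coefficient symmetry and the involution
    have hcoeff : ∀ d, f.coeff (Finsupp.equivMapDomain τ d) = f.coeff d := by
      intro d
      rw [Finsupp.equivMapDomain_eq_mapDomain]
      calc MvPolynomial.coeff (Finsupp.mapDomain τ d) f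
          = MvPolynomial.coeff (Finsupp.mapDomain τ d) (MvPolynomial.rename τ f) := by
            rw [hf τ]
        _ = f.coeff d := MvPolynomial.coeff_rename_mapDomain _ τ.injective f d
    have happu : ∀ d : Fin (n - 1) →₀ ℕ, (Finsupp.equivMapDomain τ d) u = d v := by
      intro d
      simp [Finsupp.equivMapDomain_apply, hτ, Equiv.symm_swap, Equiv.swap_apply_left]
    have happv : ∀ d : Fin (n - 1) →₀ ℕ, (Finsupp.equivMapDomain τ d) v = d u := by
      intro d
      simp [Finsupp.equivMapDomain_apply, hτ, Equiv.symm_swap, Equiv.swap_apply_right]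
    have happo : ∀ (d : Fin (n - 1) →₀ ℕ) (i : Fin (n - 1)), i ≠ u → i ≠ v →
        (Finsupp.equivMapDomain τ d) i = d i := by
      intro d i hiu hiv
      simp [Finsupp.equivMapDomain_apply, hτ, Equiv.symm_swap,
        Equiv.swap_apply_of_ne_of_ne hiu hiv]
    have hinvol : ∀ d : Fin (n - 1) →₀ ℕ,
        Finsupp.equivMapDomain τ (Finsupp.equivMapDomain τ d) = d := by
      intro d
      ext i
      simp [Finsupp.equivMapDomain_apply, hτ, Equiv.symm_swap, Equiv.swap_apply_self]
    have hQfix : ∀ d : Fin (n - 1) →₀ ℕ, Qc (Finsupp.equivMapDomain τ d) = Qc d := by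
      intro d
      refine Finset.prod_congr rfl fun i hi => ?_
      have hiv : i ≠ v := (Finset.mem_erase.mp hi).1
      have hiu : i ≠ u := (Finset.mem_erase.mp (Finset.mem_erase.mp hi).2).1
      rw [happo d i hiu hiv]
    -- the paired commutation
    have hpairc : ∀ d : Fin (n - 1) →₀ ℕ,
        Commute σ (((Pc d : CC s n) : Hecke R s n)
          + ((Pc (Finsupp.equivMapDomain τ d) : CC s n) : Hecke R s n)) := by
      intro d
      rw [hdecomp d, hdecomp (Finsupp.equivMapDomain τ d), hQfix, happu, happv, ← add_mul]
      exact (key_comm_S hq hab hbrel _ _).mul_right (hQcom d)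
    have key : ∑ d ∈ f.support,
        f.coeff d • (((Pc d : CC s n) : Hecke R s n) * σ
          - σ * ((Pc d : CC s n) : Hecke R s n)) = 0 := by
      refine Finset.sum_involution (fun d _ => Finsupp.equivMapDomain τ d) ?_ ?_ ?_ ?_
      · intro d hd
        rw [hcoeff d, ← smul_add]
        have h0 : (((Pc d : CC s n) : Hecke R s n) * σ
              - σ * ((Pc d : CC s n) : Hecke R s n))
            + (((Pc (Finsupp.equivMapDomain τ d) : CC s n) : Hecke R s n) * σ
              - σ * ((Pc (Finsupp.equivMapDomain τ d) : CC s n) : Hecke R s n)) = 0 := by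
          rw [sub_add_sub_comm, ← add_mul, ← mul_add, sub_eq_zero]
          exact (hpairc d).symm
        rw [h0, smul_zero]
      · intro d hd hne0
        intro hfix
        apply hne0
        have hduv : d u = d v := by
          conv_lhs => rw [← hfix]
          rw [happu d]
        have hcom : Commute σ ((Pc d : CC s n) : Hecke R s n) := by
          rw [hdecomp d, hduv]
          exact (key_comm_P hq hab hbrel _).mul_right (hQcom d)
        rw [← hcom.eq, sub_self, smul_zero]
      · intro d hd
        rw [MvPolynomial.mem_support_iff] at hd ⊢
        rw [hcoeff d]
        exact hd
      · intro d hd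
        exact hinvol d
    -- conclude
    show (∑ d ∈ f.support, f.coeff d • ((Pc d : CC s n) : Hecke R s n)) * σ
        = σ * ∑ d ∈ f.support, f.coeff d • ((Pc d : CC s n) : Hecke R s n)
    have expand : (∑ d ∈ f.support, f.coeff d • ((Pc d : CC s n) : Hecke R s n)) * σ
        - σ * (∑ d ∈ f.support, f.coeff d • ((Pc d : CC s n) : Hecke R s n))
        = ∑ d ∈ f.support,
          f.coeff d • (((Pc d : CC s n) : Hecke R s n) * σ
            - σ * ((Pc d : CC s n) : Hecke R s n)) := by
      rw [Finset.sum_mul, Finset.mul_sum, ← Finset.sum_sub_distrib]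
      refine Finset.sum_congr rfl fun d _ => ?_
      rw [smul_mul_assoc, mul_smul_comm, smul_sub]
    exact sub_eq_zero.mp (expand.trans key)

end DJ

end DipperJamesAux

/-- (Dipper–James)  For every symmetric polynomial `f` in `n - 1` variables
over `R`, the evaluation `f(M(2), …, M(n))` at the Murphy operators is central
in the Hecke algebra `Hₙ`: it commutes with every element of `Hₙ`. -/
theorem evalMurphy_central (s : Rˣ) (n : ℕ) (hn : 1 ≤ n)
    (f : MvPolynomial (Fin (n - 1)) R) (hf : f.IsSymmetric) (x : Hecke R s n) :
    evalMurphy s n f * x = x * evalMurphy s n f := by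
  obtain ⟨y, rfl⟩ := RingQuot.mkAlgHom_surjective R (HeckeRel R s n) x
  induction y using FreeAlgebra.induction with
  | grade0 r =>
    rw [AlgHom.commutes]
    exact (Algebra.commutes r _).symm
  | grade1 i =>
    have hgen : RingQuot.mkAlgHom R (HeckeRel R s n) (FreeAlgebra.ι R i)
        = DJ.G s n i.val := by
      rw [DJ.G, heckeGen, dif_pos i.isLt]
    rw [hgen]
    exact (DJ.commute_evalMurphy_G s n f hf i.val i.isLt).eq
  | mul p q hp hq =>
    rw [map_mul]
    exact Commute.mul_right hp hq
  | add p q hp hq =>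
    rw [map_add]
    exact Commute.add_right hp hq
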